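/- Let X be a nonempty set and let φ, ψ : X×X×X → ℝ be functions with ψ nowhere zero, satisfying φ(u,v,w) + ψ(u,v,w)·φ(s,u,t) = 0 for all u, v, w, s, t ∈ X. Then there exists a function χ : X → ℝ such that φ(u,v,w) = χ(v) for all u, v, w ∈ X (i.e. φ depends only on its middle argument), and χ(v) + ψ(u,v,w)·χ(u) = 0 for all u, v, w ∈ X; moreover, either χ is identically zero or χ is nowhere zero. -/
import Mathlib

/-- if `φ(u,v,w) + ψ(u,v,w)·φ(s,u,t) = 0` for all `u,v,w,s,t`
with `ψ` nowhere zero, then `φ` depends only on its middle argument,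
`χ(v) + ψ(u,v,w)·χ(u) = 0`, and `χ` is either identically zero or nowhere
zero. -/
theorem phi_depends_only_on_middle_argument
    (X : Type*) [Nonempty X] (φ ψ : X × X × X → ℝ)
    (hψ : ∀ p, ψ p ≠ 0)
    (hfe : ∀ u v w s t : X, φ (u, v, w) + ψ (u, v, w) * φ (s, u, t) = 0) :
    ∃ χ : X → ℝ,
      (∀ u v w : X, φ (u, v, w) = χ v) ∧
      (∀ u v w : X, χ v + ψ (u, v, w) * χ u = 0) ∧
      ((∀ v, χ v = 0) ∨ (∀ v, χ v ≠ 0)) := by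
  obtain ⟨x₀⟩ := ‹Nonempty X›
  set χ : X → ℝ := fun v => φ (x₀, v, x₀) with hχ
  have key : ∀ u v w : X, φ (u, v, w) = χ v := by
    intro u v w
    have h1 := hfe v u u x₀ x₀
    have h2 := hfe v u u u w
    have h3 : ψ (v, u, u) * φ (x₀, v, x₀) = ψ (v, u, u) * φ (u, v, w) := by
      linarith
    have := mul_left_cancel₀ (hψ (v, u, u)) h3
    simp only [hχ]
    linarith
  have rel : ∀ u v w : X, χ v + ψ (u, v, w) * χ u = 0 := by
    intro u v w
    have h1 := hfe u v w x₀ x₀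
    rw [key u v w, key x₀ u x₀] at h1
    exact h1
  refine ⟨χ, key, rel, ?_⟩
  by_cases h : ∀ v, χ v = 0
  · exact Or.inl h
  · push_neg at h
    obtain ⟨v₀, hv₀⟩ := h
    right
    intro v hv
    have := rel v v₀ v₀
    rw [hv, mul_zero, add_zero] at this
    exact hv₀ this
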